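/- Let R be a 2-torsion free σ-prime ring, U a square closed σ-Lie ideal of R, and d a derivation of R. If d([x,y]) = 0 for all x, y ∈ U, then d = 0 or U ⊆ Z(R). -/
import Mathlib


theorem stmt13 (R : Type*) [Ring R]
  (σ : R → R)
  (hσadd : ∀ x y : R, σ (x + y) = σ x + σ y)
  (hσmul : ∀ x y : R, σ (x * y) = σ y * σ x)
  (hσinv : ∀ x : R, σ (σ x) = x)
  (htor : ∀ x : R, x + x = 0 → x = 0)
  (hsp : ∀ a b : R, (∀ r : R, a * r * b = 0) → (∀ r : R, a * r * σ b = 0) → a = 0 ∨ b = 0)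
  (U : AddSubgroup R)
  (hLie : ∀ u ∈ U, ∀ r : R, u * r - r * u ∈ U)
  (hσU : ∀ u ∈ U, σ u ∈ U)
  (hsq : ∀ u ∈ U, u * u ∈ U)
  (d : R → R)
  (hdadd : ∀ x y : R, d (x + y) = d x + d y)
  (hdmul : ∀ x y : R, d (x * y) = d x * y + x * d y)
  (h : ∀ x ∈ U, ∀ y ∈ U, d (x * y - y * x) = 0) :
    (∀ x : R, d x = 0) ∨ (∀ u ∈ U, ∀ r : R, u * r = r * u) := by
  by_cases hcomm : ∀ u ∈ U, ∀ r : R, u * r = r * u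
  · exact Or.inr hcomm
  left
  push_neg at hcomm
  obtain ⟨w0, hw0U, r0, hw0r0⟩ := hcomm
  -- additive-map basics
  have hZERO : ∀ δ : R → R, (∀ x y : R, δ (x + y) = δ x + δ y) → δ 0 = 0 := by
    intro δ hδa
    have h' := hδa 0 0
    rw [add_zero] at h'
    exact (left_eq_add.mp h')
  have hNEG : ∀ δ : R → R, (∀ x y : R, δ (x + y) = δ x + δ y) → ∀ x : R, δ (-x) = -δ x := by
    intro δ hδa x
    have h' := hδa x (-x)
    rw [add_neg_cancel, hZERO δ hδa] at h'
    exact (eq_neg_of_add_eq_zero_right h'.symm)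
  have hSUBf : ∀ δ : R → R, (∀ x y : R, δ (x + y) = δ x + δ y) →
      ∀ a b : R, δ (a - b) = δ a - δ b := by
    intro δ hδa a b
    rw [sub_eq_add_neg, hδa, hNEG δ hδa, ← sub_eq_add_neg]
  have hσ0 : σ 0 = 0 := hZERO σ hσadd
  have hσneg : ∀ x : R, σ (-x) = -σ x := hNEG σ hσadd
  have hσsub : ∀ a b : R, σ (a - b) = σ a - σ b := hSUBf σ hσadd
  have hdneg : ∀ x : R, d (-x) = -d x := hNEG d hdadd
  -- torsion helpers
  have htor2 : ∀ x : R, (2 : R) * x = 0 → x = 0 := by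
    intro x hx
    rw [two_mul] at hx
    exact htor x hx
  have htorpow : ∀ (n : ℕ) (x : R), (2 : R) ^ n * x = 0 → x = 0 := by
    intro n
    induction n with
    | zero => intro x hx; rwa [pow_zero, one_mul] at hx
    | succ n ih =>
        intro x hx
        rw [pow_succ', mul_assoc] at hx
        exact ih x (htor2 _ hx)
  -- powers of 2 commute with everything
  have hp1 : ∀ (n : ℕ) (x y : R), (2 : R) ^ n * (x * y) = x * ((2 : R) ^ n * y) := by
    intro n
    induction n with
    | zero => intro x y; rw [pow_zero, one_mul, one_mul]
    | succ n ih =>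
        intro x y
        calc (2 : R) ^ (n + 1) * (x * y) = (2 : R) * ((2 : R) ^ n * (x * y)) := by
              rw [pow_succ', mul_assoc]
          _ = (2 : R) * (x * ((2 : R) ^ n * y)) := by rw [ih]
          _ = x * ((2 : R) * ((2 : R) ^ n * y)) := by noncomm_ring
          _ = x * ((2 : R) ^ (n + 1) * y) := by
              rw [← mul_assoc (2 : R) ((2 : R) ^ n) y, ← pow_succ']
  have hp2 : ∀ (n : ℕ) (x : R), x * (2 : R) ^ n = (2 : R) ^ n * x := by
    intro n x
    have h' := hp1 n x 1
    rw [mul_one, mul_one] at h'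
    exact h'.symm
  have hσ1 : σ 1 = 1 := by
    have h' := hσmul (σ 1) 1
    rw [mul_one, hσinv] at h'
    rw [mul_one] at h'
    exact h'.symm
  have hσ2 : σ 2 = 2 := by
    rw [show (2 : R) = 1 + 1 from by norm_num, hσadd, hσ1]
  have hσpow2 : ∀ n : ℕ, σ ((2 : R) ^ n) = (2 : R) ^ n := by
    intro n
    induction n with
    | zero => rw [pow_zero, hσ1]
    | succ n ih => rw [pow_succ, hσmul, hσ2, ih, ← pow_succ', ← pow_succ]
  have hfac : ∀ (n : ℕ) (a t b : R), a * ((2 : R) ^ n * t) * b = (2 : R) ^ n * (a * t * b) := by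
    intro n a t b
    rw [← hp1 n a t, mul_assoc]
  -- U closure facts
  have hU2mul : ∀ u ∈ U, ∀ v ∈ U, (2 : R) * (u * v) ∈ U := by
    intro u hu v hv
    have h1 : u * v + v * u ∈ U := by
      have h2 := sub_mem (sub_mem (hsq _ (add_mem hu hv)) (hsq u hu)) (hsq v hv)
      rwa [show (u + v) * (u + v) - u * u - v * v = u * v + v * u from by noncomm_ring] at h2
    have h3 : u * v - v * u ∈ U := hLie u hu v
    have h4 := add_mem h1 h3
    rwa [show (u * v + v * u) + (u * v - v * u) = (2 : R) * (u * v) from by noncomm_ring] at h4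
  have hUpow : ∀ (n : ℕ), ∀ u ∈ U, (2 : R) ^ n * u ∈ U := by
    intro n
    induction n with
    | zero => intro u hu; rwa [pow_zero, one_mul]
    | succ n ih =>
        intro u hu
        have h1 := ih u hu
        have h2 : (2 : R) * ((2 : R) ^ n * u) ∈ U := by
          rw [two_mul]; exact add_mem h1 h1
        rwa [show (2 : R) * ((2 : R) ^ n * u) = (2 : R) ^ (n + 1) * u from by
          rw [← mul_assoc, ← pow_succ']] at h2
  -- D = {t | ∃ n, 2^n t ∈ U} closure facts
  have hDadd : ∀ s t : R, (∃ n : ℕ, (2 : R) ^ n * s ∈ U) → (∃ n : ℕ, (2 : R) ^ n * t ∈ U) →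
      (∃ n : ℕ, (2 : R) ^ n * (s + t) ∈ U) := by
    rintro s t ⟨a, ha⟩ ⟨b, hb⟩
    refine ⟨a + b, ?_⟩
    rw [mul_add]
    refine add_mem ?_ ?_
    · rw [show (2 : R) ^ (a + b) * s = (2 : R) ^ b * ((2 : R) ^ a * s) from by
        rw [← mul_assoc, ← pow_add, add_comm b a]]
      exact hUpow b _ ha
    · rw [show (2 : R) ^ (a + b) * t = (2 : R) ^ a * ((2 : R) ^ b * t) from by
        rw [← mul_assoc, ← pow_add]]
      exact hUpow a _ hb
  have hDneg : ∀ t : R, (∃ n : ℕ, (2 : R) ^ n * t ∈ U) → (∃ n : ℕ, (2 : R) ^ n * (-t) ∈ U) := by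
    rintro t ⟨n, ht⟩
    exact ⟨n, by rw [mul_neg]; exact neg_mem ht⟩
  have hDsub : ∀ s t : R, (∃ n : ℕ, (2 : R) ^ n * s ∈ U) → (∃ n : ℕ, (2 : R) ^ n * t ∈ U) →
      (∃ n : ℕ, (2 : R) ^ n * (s - t) ∈ U) := by
    intro s t hs ht'
    have h' := hDadd s (-t) hs (hDneg t ht')
    rwa [← sub_eq_add_neg] at h'
  have hDmul : ∀ s t : R, (∃ n : ℕ, (2 : R) ^ n * s ∈ U) → (∃ n : ℕ, (2 : R) ^ n * t ∈ U) →
      (∃ n : ℕ, (2 : R) ^ n * (s * t) ∈ U) := by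
    rintro s t ⟨a, ha⟩ ⟨b, hb⟩
    refine ⟨a + b + 1, ?_⟩
    have h1 := hU2mul _ ha _ hb
    rwa [show (2 : R) * (((2 : R) ^ a * s) * ((2 : R) ^ b * t)) = (2 : R) ^ (a + b + 1) * (s * t) from by
      rw [mul_assoc ((2 : R) ^ a) s, ← hp1 b s t, ← mul_assoc ((2 : R) ^ a) ((2 : R) ^ b),
        ← pow_add, ← mul_assoc, ← pow_succ']] at h1
  have hDlie : ∀ t : R, (∃ n : ℕ, (2 : R) ^ n * t ∈ U) → ∀ r : R,
      (∃ n : ℕ, (2 : R) ^ n * (t * r - r * t) ∈ U) := by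
    rintro t ⟨n, ht⟩ r
    refine ⟨n, ?_⟩
    have h1 := hLie _ ht r
    rwa [show ((2 : R) ^ n * t) * r - r * ((2 : R) ^ n * t) = (2 : R) ^ n * (t * r - r * t) from by
      rw [mul_sub, mul_assoc, hp1, hp1]] at h1
  have hDσ : ∀ t : R, (∃ n : ℕ, (2 : R) ^ n * t ∈ U) → (∃ n : ℕ, (2 : R) ^ n * (σ t) ∈ U) := by
    rintro t ⟨n, ht⟩
    refine ⟨n, ?_⟩
    have h1 := hσU _ ht
    rwa [hσmul, hσpow2, hp2] at h1
  -- the derivation τ = σ ∘ d ∘ σ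
  obtain ⟨τ, hτdef⟩ : ∃ τ : R → R, ∀ x : R, τ x = σ (d (σ x)) := ⟨_, fun _ => rfl⟩
  have hτa : ∀ x y : R, τ (x + y) = τ x + τ y := by
    intro x y
    rw [hτdef, hτdef, hτdef, hσadd, hdadd, hσadd]
  have hτm : ∀ x y : R, τ (x * y) = τ x * y + x * τ y := by
    intro x y
    rw [hτdef, hτdef, hτdef, hσmul, hdmul, hσadd, hσmul, hσmul, hσinv, hσinv]
    exact add_comm _ _
  have hτcomm : ∀ x ∈ U, ∀ y ∈ U, τ (x * y - y * x) = 0 := by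
    intro x hx y hy
    rw [hτdef, hσsub, hσmul, hσmul, h (σ y) (hσU y hy) (σ x) (hσU x hx), hσ0]
  -- Lemma A0: homogeneous v with ad_v² = 0 is central
  have A0 : ∀ v : R, (σ v = v ∨ σ v = -v) →
      (∀ r : R, v * (v * r - r * v) - (v * r - r * v) * v = 0) → ∀ r : R, v * r - r * v = 0 := by
    intro v hhv had2
    have step1 : ∀ r s : R, (v * r - r * v) * (v * s - s * v) = 0 := by
      intro r s
      have hid : v * (v * (r * s) - (r * s) * v) - (v * (r * s) - (r * s) * v) * v =
          (v * (v * r - r * v) - (v * r - r * v) * v) * s +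
          (((v * r - r * v) * (v * s - s * v)) + ((v * r - r * v) * (v * s - s * v))) +
          r * (v * (v * s - s * v) - (v * s - s * v) * v) := by noncomm_ring
      rw [had2 (r * s), had2 r, had2 s, zero_mul, mul_zero, zero_add, add_zero] at hid
      exact htor _ hid.symm
    have step2 : ∀ r s t : R, (v * r - r * v) * s * (v * t - t * v) = 0 := by
      intro r s t
      have hid : (v * r - r * v) * (v * (s * t) - (s * t) * v) =
          ((v * r - r * v) * (v * s - s * v)) * t + (v * r - r * v) * s * (v * t - t * v) := by
        noncomm_ring
      rw [step1 r (s * t), step1 r s, zero_mul, zero_add] at hid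
      exact hid.symm
    intro r
    have hσc : ∀ s : R, (v * r - r * v) * s * (σ (v * r - r * v)) = 0 := by
      intro s
      rcases hhv with hh | hh
      · rw [hσsub, hσmul, hσmul, hh,
          show (σ r) * v - v * (σ r) = -(v * (σ r) - (σ r) * v) from by noncomm_ring,
          mul_neg, neg_eq_zero]
        exact step2 r s (σ r)
      · rw [hσsub, hσmul, hσmul, hh,
          show (σ r) * (-v) - (-v) * (σ r) = v * (σ r) - (σ r) * v from by noncomm_ring]
        exact step2 r s (σ r)
    rcases hsp _ _ (fun s => step2 r s r) hσc with h' | h'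
    · exact h'
    · exact h'
  -- Lemma A: [U,U] = 0 contradicts noncentrality of U
  have LA : (∀ x ∈ U, ∀ y ∈ U, x * y - y * x = 0) → False := by
    intro hUU
    apply hw0r0
    have hcent : ∀ v ∈ U, (σ v = v ∨ σ v = -v) → ∀ r : R, v * r - r * v = 0 :=
      fun v hv hh => A0 v hh (fun s => hUU v hv _ (hLie v hv s))
    have h1 := hcent (w0 + σ w0) (add_mem hw0U (hσU w0 hw0U))
      (Or.inl (by rw [hσadd, hσinv]; exact add_comm _ _))
    have h2 := hcent (w0 - σ w0) (sub_mem hw0U (hσU w0 hw0U))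
      (Or.inr (by rw [hσsub, hσinv]; exact (neg_sub w0 (σ w0)).symm))
    have key : (w0 * r0 - r0 * w0) + (w0 * r0 - r0 * w0) =
        ((w0 + σ w0) * r0 - r0 * (w0 + σ w0)) + ((w0 - σ w0) * r0 - r0 * (w0 - σ w0)) := by
      noncomm_ring
    rw [h1 r0, h2 r0, add_zero] at key
    exact sub_eq_zero.mp (htor _ key)
  -- get a noncommuting pair in D
  by_cases hDD : ∀ a b : R, (∃ n : ℕ, (2 : R) ^ n * a ∈ U) → (∃ n : ℕ, (2 : R) ^ n * b ∈ U) →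
      a * b - b * a = 0
  · exact (LA (fun x hx y hy => hDD x y ⟨0, by rwa [pow_zero, one_mul]⟩
      ⟨0, by rwa [pow_zero, one_mul]⟩)).elim
  push_neg at hDD
  obtain ⟨a0, b0, hDa0, hDb0, he⟩ := hDD
  -- r * [a,a'] ∈ D and (r * [a,a']) * s ∈ D
  have hre : ∀ a a' : R, (∃ n : ℕ, (2 : R) ^ n * a ∈ U) → (∃ n : ℕ, (2 : R) ^ n * a' ∈ U) →
      ∀ r : R, ∃ n : ℕ, (2 : R) ^ n * (r * (a * a' - a' * a)) ∈ U := by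
    intro a a' ha ha' r
    have h1 := hDlie a ha (r * a')
    have h2 := hDmul _ _ (hDlie a ha r) ha'
    have h3 := hDsub _ _ h1 h2
    rwa [show (a * (r * a') - (r * a') * a) - (a * r - r * a) * a' = r * (a * a' - a' * a) from by
      noncomm_ring] at h3
  have hDres : ∀ a a' : R, (∃ n : ℕ, (2 : R) ^ n * a ∈ U) → (∃ n : ℕ, (2 : R) ^ n * a' ∈ U) →
      ∀ r s : R, ∃ n : ℕ, (2 : R) ^ n * ((r * (a * a' - a' * a)) * s) ∈ U := by
    intro a a' ha ha' r s
    have h1 := hDlie _ (hre a a' ha ha' r) s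
    have h2 := hre a a' ha ha' (s * r)
    have h3 := hDadd _ _ h1 h2
    rwa [show ((r * (a * a' - a' * a)) * s - s * (r * (a * a' - a' * a))) +
        (s * r) * (a * a' - a' * a) = (r * (a * a' - a' * a)) * s from by noncomm_ring] at h3
  -- KILL lemma
  have KILL : ∀ c b : R, (∀ t : R, (∃ n : ℕ, (2 : R) ^ n * t ∈ U) → c * t * b = 0) →
      (∀ t : R, (∃ n : ℕ, (2 : R) ^ n * t ∈ U) → c * t * (σ b) = 0) → c = 0 ∨ b = 0 := by
    intro c b H1 H2
    by_cases hb : b = 0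
    · exact Or.inr hb
    left
    have hgen : ∀ a a' : R, (∃ n : ℕ, (2 : R) ^ n * a ∈ U) → (∃ n : ℕ, (2 : R) ^ n * a' ∈ U) →
        ∀ r : R, c * (r * (a * a' - a' * a)) = 0 := by
      intro a a' ha ha' r
      have hA : ∀ s : R, (c * (r * (a * a' - a' * a))) * s * b = 0 := by
        intro s
        rw [mul_assoc c (r * (a * a' - a' * a)) s]
        exact H1 _ (hDres a a' ha ha' r s)
      have hB : ∀ s : R, (c * (r * (a * a' - a' * a))) * s * (σ b) = 0 := by
        intro s
        rw [mul_assoc c (r * (a * a' - a' * a)) s]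
        exact H2 _ (hDres a a' ha ha' r s)
      rcases hsp _ _ hA hB with h' | h'
      · exact h'
      · exact absurd h' hb
    have h1 : ∀ r : R, c * r * (a0 * b0 - b0 * a0) = 0 := by
      intro r
      rw [mul_assoc]
      exact hgen a0 b0 hDa0 hDb0 r
    have h2 : ∀ r : R, c * r * (σ (a0 * b0 - b0 * a0)) = 0 := by
      intro r
      rw [hσsub, hσmul, hσmul, mul_assoc]
      exact hgen (σ b0) (σ a0) (hDσ _ hDb0) (hDσ _ hDa0) r
    rcases hsp _ _ h1 h2 with h' | h'
    · exact h'
    · exact absurd h' he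
  -- main derivation identities
  have DER : ∀ δ : R → R, (∀ x y : R, δ (x + y) = δ x + δ y) →
      (∀ x y : R, δ (x * y) = δ x * y + x * δ y) →
      (∀ x ∈ U, ∀ y ∈ U, δ (x * y - y * x) = 0) →
      ∀ x ∈ U, ∀ y ∈ U, ∀ w ∈ U, (x * y - y * x) * w * (δ x) = 0 := by
    intro δ hδa hδm hδc
    have A : ∀ x ∈ U, ∀ y ∈ U, (x * y - y * x) * (δ x) = 0 := by
      intro x hx y hy
      have ht : (2 : R) * (y * x) ∈ U := hU2mul y hy x hx
      have h1 : δ (x * ((2 : R) * (y * x)) - ((2 : R) * (y * x)) * x) = 0 := hδc x hx _ ht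
      rw [show x * ((2 : R) * (y * x)) - ((2 : R) * (y * x)) * x =
          (x * y - y * x) * x + (x * y - y * x) * x from by noncomm_ring, hδa] at h1
      have h2 := htor _ h1
      rw [hδm, hδc x hx y hy, zero_mul, zero_add] at h2
      exact h2
    intro x hx y hy w hw
    have ht : (2 : R) * (y * w) ∈ U := hU2mul y hy w hw
    have h1 := A x hx _ ht
    rw [show x * ((2 : R) * (y * w)) - ((2 : R) * (y * w)) * x =
        ((x * y - y * x) * w + y * (x * w - w * x)) + ((x * y - y * x) * w + y * (x * w - w * x))
        from by noncomm_ring, add_mul] at h1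
    have h2 := htor _ h1
    rw [add_mul, mul_assoc y, A x hx w hw, mul_zero, add_zero] at h2
    exact h2
  have Bd := DER d hdadd hdmul h
  have Bτ := DER τ hτa hτm hτcomm
  -- homogeneous elements with nonzero image centralize U
  have HOM : ∀ p ∈ U, (σ p = p ∨ σ p = -p) → d p ≠ 0 → ∀ y ∈ U, p * y - y * p = 0 := by
    intro p hp hhom hdp y hy
    have H1 : ∀ t : R, (∃ n : ℕ, (2 : R) ^ n * t ∈ U) → (p * y - y * p) * t * (d p) = 0 := by
      rintro t ⟨n, ht⟩
      apply htorpow n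
      rw [← hfac]
      exact Bd p hp y hy _ ht
    have H2 : ∀ t : R, (∃ n : ℕ, (2 : R) ^ n * t ∈ U) → (p * y - y * p) * t * (σ (d p)) = 0 := by
      rintro t ⟨n, ht⟩
      have h5 := Bτ p hp y hy _ ht
      rw [hτdef] at h5
      apply htorpow n
      rw [← hfac]
      rcases hhom with hh | hh
      · rwa [hh] at h5
      · rwa [hh, hdneg, hσneg, mul_neg, neg_eq_zero] at h5
    rcases KILL _ _ H1 H2 with h' | h'
    · exact h'
    · exact absurd h' hdp
  -- d vanishes on U
  have hdU : ∀ u ∈ U, d u = 0 := by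
    have HP : ∀ p ∈ U, (σ p = p ∨ σ p = -p) → d p ≠ 0 → False := by
      intro p hp hhom hdp
      have hpy : ∀ y ∈ U, p * y - y * p = 0 := HOM p hp hhom hdp
      have hpZ : ∀ r : R, p * r - r * p = 0 := A0 p hhom (fun s => hpy _ (hLie p hp s))
      have B5 : ∀ δ : R → R, (∀ x y : R, δ (x + y) = δ x + δ y) →
          (∀ x y : R, δ (x * y) = δ x * y + x * δ y) →
          (∀ x ∈ U, ∀ y ∈ U, δ (x * y - y * x) = 0) →
          ∀ x ∈ U, ∀ y ∈ U, ∀ w ∈ U, (x * y - y * x) * w * (δ p) = 0 := by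
        intro δ hδa hδm hδc
        have A5 : ∀ x ∈ U, ∀ y ∈ U, (x * y - y * x) * (δ p) = 0 := by
          intro x hx y hy
          have ht : (2 : R) * (y * p) ∈ U := hU2mul y hy p hp
          have h1 : δ (x * ((2 : R) * (y * p)) - ((2 : R) * (y * p)) * x) = 0 := hδc x hx _ ht
          have hxp : x * p - p * x = 0 := by
            rw [show x * p - p * x = -(p * x - x * p) from by noncomm_ring, hpZ x, neg_zero]
          rw [show x * ((2 : R) * (y * p)) - ((2 : R) * (y * p)) * x =
              ((x * y - y * x) * p + (x * y - y * x) * p) + (2 : R) * (y * (x * p - p * x))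
              from by noncomm_ring, hxp, mul_zero, mul_zero, add_zero, hδa] at h1
          have h2 := htor _ h1
          rw [hδm, hδc x hx y hy, zero_mul, zero_add] at h2
          exact h2
        intro x hx y hy w hw
        have ht : (2 : R) * (y * w) ∈ U := hU2mul y hy w hw
        have h1 := A5 x hx _ ht
        rw [show x * ((2 : R) * (y * w)) - ((2 : R) * (y * w)) * x =
            ((x * y - y * x) * w + y * (x * w - w * x)) +
            ((x * y - y * x) * w + y * (x * w - w * x)) from by noncomm_ring, add_mul] at h1
        have h2 := htor _ h1
        rw [add_mul, mul_assoc y, A5 x hx w hw, mul_zero, add_zero] at h2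
        exact h2
      have hUU : ∀ x ∈ U, ∀ y ∈ U, x * y - y * x = 0 := by
        intro x hx y hy
        have H1 : ∀ t' : R, (∃ n : ℕ, (2 : R) ^ n * t' ∈ U) →
            (x * y - y * x) * t' * (d p) = 0 := by
          rintro t' ⟨n, ht'⟩
          apply htorpow n
          rw [← hfac]
          exact B5 d hdadd hdmul h x hx y hy _ ht'
        have H2 : ∀ t' : R, (∃ n : ℕ, (2 : R) ^ n * t' ∈ U) →
            (x * y - y * x) * t' * (σ (d p)) = 0 := by
          rintro t' ⟨n, ht'⟩
          have h5 := B5 τ hτa hτm hτcomm x hx y hy _ ht'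
          rw [hτdef] at h5
          apply htorpow n
          rw [← hfac]
          rcases hhom with hh | hh
          · rwa [hh] at h5
          · rwa [hh, hdneg, hσneg, mul_neg, neg_eq_zero] at h5
        rcases KILL _ _ H1 H2 with h' | h'
        · exact h'
        · exact absurd h' hdp
      exact LA hUU
    intro u hu
    by_contra hdu
    by_cases h1 : d (u + σ u) = 0
    · refine HP (u - σ u) (sub_mem hu (hσU u hu))
        (Or.inr (by rw [hσsub, hσinv]; exact (neg_sub u (σ u)).symm)) ?_
      intro h2
      apply hdu
      apply htor
      have hpq : d (u + σ u) + d (u - σ u) = d u + d u := by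
        rw [← hdadd, ← hdadd u u]
        congr 1
        abel
      rw [h1, h2, add_zero] at hpq
      exact hpq.symm
    · exact HP (u + σ u) (add_mem hu (hσU u hu))
        (Or.inl (by rw [hσadd, hσinv]; exact add_comm _ _)) h1
  have hτU : ∀ u ∈ U, τ u = 0 := by
    intro u hu
    rw [hτdef, hdU _ (hσU u hu), hσ0]
  -- final step: [U,U] R d(R) = 0
  have S8 : ∀ δ : R → R, (∀ x y : R, δ (x + y) = δ x + δ y) →
      (∀ x y : R, δ (x * y) = δ x * y + x * δ y) → (∀ u ∈ U, δ u = 0) →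
      ∀ u ∈ U, ∀ w ∈ U, ∀ s t : R, (u * w - w * u) * s * (δ t) = 0 := by
    intro δ hδa hδm hδU
    have S6 : ∀ u ∈ U, ∀ r : R, u * (δ r) - (δ r) * u = 0 := by
      intro u hu r
      have h0 : δ (u * r - r * u) = 0 := hδU _ (hLie u hu r)
      rw [hSUBf δ hδa, hδm, hδm, hδU u hu, zero_mul, mul_zero, zero_add, add_zero] at h0
      exact h0
    have S7 : ∀ u ∈ U, ∀ w ∈ U, ∀ s : R, (u * w - w * u) * (δ s) = 0 := by
      intro u hu w hw s
      have h1 := S6 u hu (w * s)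
      rw [hδm, hδU w hw, zero_mul, zero_add] at h1
      have hid : (u * w - w * u) * (δ s) =
          (u * (w * (δ s)) - (w * (δ s)) * u) + w * ((δ s) * u - u * (δ s)) := by noncomm_ring
      rw [hid, h1, zero_add]
      have h3 : (δ s) * u - u * (δ s) = 0 := by
        rw [show (δ s) * u - u * (δ s) = -(u * (δ s) - (δ s) * u) from by noncomm_ring,
          S6 u hu s, neg_zero]
      rw [h3, mul_zero]
    intro u hu w hw s t
    have h1 := S7 u hu w hw (s * t)
    rw [hδm, mul_add, ← mul_assoc, S7 u hu w hw s, zero_mul, zero_add, ← mul_assoc] at h1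
    exact h1
  intro t
  by_contra hdt
  have hUU : ∀ x ∈ U, ∀ y ∈ U, x * y - y * x = 0 := by
    intro x hx y hy
    rcases hsp (x * y - y * x) (d t) (fun s => S8 d hdadd hdmul hdU x hx y hy s t) (fun s => by
      have h5 := S8 τ hτa hτm hτU x hx y hy s (σ t)
      rwa [hτdef, hσinv] at h5) with h' | h'
    · exact h'
    · exact absurd h' hdt
  exact LA hUU
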